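/- Let N ≥ 3 and let A = (A_k^j) be an (N+1) × N real matrix with entries in {−1, 0, 1} such that the square matrix E obtained by deleting the first row of A is invertible, A_k^k = 1, A_k^j ∈ {−1, 0} for j < k, A_k^j = 0 for j > k (indexing rows j = 1,…,N of E), and each column of E contains at most two nonzero entries. Let b ∈ ℝ^N with |b_j| ≤ β for all j, and let λ ∈ ℝ^N be the unique solution of E λ = b. Then |λ_k| ≤ N · 2^{N−3} · β for each k. -/

import Mathlib

/-- Let `N ≥ 3` and let `E` be an invertible `N × N` real matrix with entries
in `{−1,0,1}`, unit diagonal, zeros below the diagonal, entries above the diagonal in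
`{−1,0}`, and at most two nonzero entries in each column. If `E λ = b` with `|b_j| ≤ β`
for all `j`, then `|λ_k| ≤ N · 2^{N−3} · β` for all `k`. -/
theorem stmt19 (N : ℕ) (hN : 3 ≤ N)
    (E : Matrix (Fin N) (Fin N) ℝ)
    (hentries : ∀ j k, E j k = 1 ∨ E j k = 0 ∨ E j k = -1)
    (hdiag : ∀ k, E k k = 1)
    (hlower : ∀ j k : Fin N, k < j → E j k = 0)
    (hupper : ∀ j k : Fin N, j < k → E j k = 0 ∨ E j k = -1)
    (hcol : ∀ k : Fin N, (Finset.univ.filter fun j => E j k ≠ 0).card ≤ 2)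
    (hinv : IsUnit E.det)
    (b lam : Fin N → ℝ) (β : ℝ)
    (hb : ∀ j, |b j| ≤ β)
    (hsol : E.mulVec lam = b) :
    ∀ k, |lam k| ≤ (N : ℝ) * 2 ^ (N - 3) * β := by
  have hβ : (0:ℝ) ≤ β := le_trans (abs_nonneg _) (hb ⟨0, by omega⟩)
  -- Main inductive claim: the sum of |lam k| over "roots relative to level j"
  -- is at most (N - j) * β.
  have key : ∀ d j, j + d = N →
      ∑ k ∈ Finset.univ.filter (fun k : Fin N => j ≤ (k:ℕ) ∧
          ∀ i : Fin N, j ≤ (i:ℕ) → i < k → E i k = 0), |lam k| ≤ (d:ℝ) * β := by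
    intro d
    induction d with
    | zero =>
        intro j hj
        have he : (Finset.univ.filter (fun k : Fin N => j ≤ (k:ℕ) ∧
            ∀ i : Fin N, j ≤ (i:ℕ) → i < k → E i k = 0)) = ∅ := by
          apply Finset.filter_false_of_mem
          rintro k _ ⟨hk, -⟩
          exact absurd k.isLt (by omega)
        simp [he]
    | succ d ih =>
        intro j hj
        have hjN : j < N := by omega
        set jf : Fin N := ⟨j, hjN⟩ with hjf
        have hS' := ih (j+1) (by omega)
        set S' := Finset.univ.filter (fun k : Fin N => j+1 ≤ (k:ℕ) ∧
            ∀ i : Fin N, j+1 ≤ (i:ℕ) → i < k → E i k = 0) with hS'def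
        -- set equality
        have hset : Finset.univ.filter (fun k : Fin N => j ≤ (k:ℕ) ∧
            ∀ i : Fin N, j ≤ (i:ℕ) → i < k → E i k = 0)
            = insert jf (S'.filter (fun k => E jf k = 0)) := by
          ext k
          simp only [Finset.mem_filter, Finset.mem_univ, true_and, Finset.mem_insert, hS'def]
          constructor
          · rintro ⟨hk1, hk2⟩
            by_cases hkj : k = jf
            · exact Or.inl hkj
            · right
              have hklt : j < (k:ℕ) := by
                rcases lt_or_eq_of_le hk1 with h | h
                · exact h
                · exact absurd (Fin.ext h.symm : k = jf) hkj
              refine ⟨⟨by omega, fun i hi hik => hk2 i (by omega) hik⟩,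
                hk2 jf (le_refl j) (by rw [Fin.lt_def]; exact hklt)⟩
          · rintro (rfl | ⟨⟨hk1, hk2⟩, hk3⟩)
            · exact ⟨le_refl j, fun i hi hik => absurd hik (by rw [Fin.lt_def]; simp; omega)⟩
            · refine ⟨by omega, fun i hi hik => ?_⟩
              by_cases hij : (i:ℕ) = j
              · have : i = jf := Fin.ext hij
                rw [this]; exact hk3
              · exact hk2 i (by omega) hik
        have hnotmem : jf ∉ S'.filter (fun k => E jf k = 0) := by
          simp only [Finset.mem_filter, Finset.mem_univ, true_and, hS'def]
          rintro ⟨⟨h, -⟩, -⟩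
          simp [hjf] at h
        rw [hset, Finset.sum_insert hnotmem]
        -- the row equation
        have hrow : lam jf = b jf - ∑ k ∈ Finset.univ.erase jf, E jf k * lam k := by
          have hr := congrFun hsol jf
          simp only [Matrix.mulVec, dotProduct] at hr
          rw [← Finset.add_sum_erase _ _ (Finset.mem_univ jf), hdiag, one_mul] at hr
          linarith
        set T := S'.filter (fun k => E jf k ≠ 0) with hT
        -- entries with E jf k ≠ 0, k ≠ jf, lie strictly above j and belong to T
        have hmemT : ∀ k ∈ (Finset.univ.erase jf).filter (fun k => E jf k ≠ 0),
            k ∈ T ∧ |E jf k| = 1 := by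
          intro k hk
          simp only [Finset.mem_filter, Finset.mem_erase, Finset.mem_univ, and_true, true_and] at hk
          obtain ⟨hkne, hkE⟩ := hk
          have hjk : jf < k := by
            rcases lt_trichotomy jf k with h | h | h
            · exact h
            · exact absurd h.symm hkne
            · exact absurd (hlower jf k h) hkE
          have hE1 : E jf k = -1 := by
            rcases hupper jf k hjk with h | h
            · exact absurd h hkE
            · exact h
          have hcolk : ∀ i : Fin N, j+1 ≤ (i:ℕ) → i < k → E i k = 0 := by
            intro i hi hik
            by_contra hio
            have hine : i ≠ jf := by
              intro h; rw [h] at hi; simp [hjf] at hi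
            have hink : i ≠ k := ne_of_lt hik
            have hsub : ({jf, i, k} : Finset (Fin N)) ⊆
                Finset.univ.filter (fun j' => E j' k ≠ 0) := by
              intro x hx
              simp only [Finset.mem_insert, Finset.mem_singleton] at hx
              simp only [Finset.mem_filter, Finset.mem_univ, true_and]
              rcases hx with rfl | rfl | rfl
              · exact hkE
              · exact hio
              · rw [hdiag]; norm_num
            have hcard : ({jf, i, k} : Finset (Fin N)).card = 3 := by
              rw [Finset.card_insert_of_notMem (by
                    simp only [Finset.mem_insert, Finset.mem_singleton]
                    push_neg
                    exact ⟨fun h => hine h.symm, ne_of_lt hjk⟩),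
                  Finset.card_insert_of_notMem (by simpa using hink),
                  Finset.card_singleton]
            have := Finset.card_le_card hsub
            have := hcol k
            omega
          constructor
          · simp only [hT, hS'def, Finset.mem_filter, Finset.mem_univ, true_and]
            refine ⟨⟨?_, hcolk⟩, hkE⟩
            have := hjk
            rw [Fin.lt_def] at this
            exact this
          · rw [hE1]; norm_num
        -- bound |lam jf|
        have hbound : |lam jf| ≤ β + ∑ k ∈ T, |lam k| := by
          rw [hrow]
          have h1 : |b jf - ∑ k ∈ Finset.univ.erase jf, E jf k * lam k|
              ≤ |b jf| + |∑ k ∈ Finset.univ.erase jf, E jf k * lam k| := by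
            rw [sub_eq_add_neg]
            exact (abs_add_le _ _).trans (by rw [abs_neg])
          have h2 : |∑ k ∈ Finset.univ.erase jf, E jf k * lam k|
              ≤ ∑ k ∈ Finset.univ.erase jf, |E jf k * lam k| :=
            Finset.abs_sum_le_sum_abs _ _
          have h3 : ∑ k ∈ Finset.univ.erase jf, |E jf k * lam k|
              = ∑ k ∈ (Finset.univ.erase jf).filter (fun k => E jf k ≠ 0),
                  |E jf k * lam k| := by
            symm
            apply Finset.sum_filter_of_ne
            intro k _ hne h0
            apply hne
            rw [h0, zero_mul, abs_zero]
          have h4 : ∑ k ∈ (Finset.univ.erase jf).filter (fun k => E jf k ≠ 0),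
              |E jf k * lam k| ≤ ∑ k ∈ T, |lam k| := by
            rw [Finset.sum_congr rfl (fun k hk => by
              rw [abs_mul, (hmemT k hk).2, one_mul])]
            apply Finset.sum_le_sum_of_subset_of_nonneg
            · intro k hk; exact (hmemT k hk).1
            · intro _ _ _; exact abs_nonneg _
          calc |b jf - ∑ k ∈ Finset.univ.erase jf, E jf k * lam k|
              ≤ |b jf| + ∑ k ∈ (Finset.univ.erase jf).filter (fun k => E jf k ≠ 0),
                  |E jf k * lam k| := by rw [← h3]; linarith
            _ ≤ β + ∑ k ∈ T, |lam k| := add_le_add (hb jf) h4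
        have hsplit : ∑ k ∈ S'.filter (fun k => E jf k = 0), |lam k|
            + ∑ k ∈ T, |lam k| = ∑ k ∈ S', |lam k| :=
          Finset.sum_filter_add_sum_filter_not S' (fun k => E jf k = 0) _
        have : |lam jf| + ∑ k ∈ S'.filter (fun k => E jf k = 0), |lam k|
            ≤ β + ∑ k ∈ S', |lam k| := by linarith
        calc |lam jf| + ∑ k ∈ S'.filter (fun k => E jf k = 0), |lam k|
            ≤ β + ∑ k ∈ S', |lam k| := this
          _ ≤ β + (d:ℝ) * β := by linarith
          _ = ((d+1 : ℕ):ℝ) * β := by push_cast; ring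
  intro k
  have hmem : k ∈ Finset.univ.filter (fun k' : Fin N => (k:ℕ) ≤ (k':ℕ) ∧
      ∀ i : Fin N, (k:ℕ) ≤ (i:ℕ) → i < k' → E i k' = 0) := by
    simp only [Finset.mem_filter, Finset.mem_univ, true_and]
    exact ⟨le_refl _, fun i hi hik => absurd hik (by rw [Fin.lt_def]; omega)⟩
  have h5 := key (N - (k:ℕ)) (k:ℕ) (by omega)
  have h6 : |lam k| ≤ ((N - (k:ℕ) : ℕ):ℝ) * β :=
    le_trans (Finset.single_le_sum (fun i _ => abs_nonneg (lam i)) hmem) h5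
  have h7 : ((N - (k:ℕ) : ℕ):ℝ) * β ≤ (N:ℝ) * β := by
    apply mul_le_mul_of_nonneg_right _ hβ
    exact_mod_cast Nat.sub_le N (k:ℕ)
  have hp : (1:ℝ) ≤ 2 ^ (N - 3) := one_le_pow₀ (by norm_num)
  have h8 : (N:ℝ) * β ≤ (N:ℝ) * 2 ^ (N - 3) * β := by
    nlinarith [mul_nonneg (Nat.cast_nonneg N : (0:ℝ) ≤ (N:ℝ)) hβ]
  linarith
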